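/- Let Ω ⊊ ℂ be a simply connected domain, starlike at infinity (i.e., Ω + t ⊆ Ω for all t ≥ 0), containing a maximal horizontal strip S = {z : a < Im z < b}. Fix y₀ ∈ (a,b) and define δ_Ω(t) as the maximum of a − inf I(t) and sup I(t) − b, where I(t) is the connected component of {y : t + iy ∈ Ω} containing y₀. Then δ_Ω is monotonically non-decreasing on any interval (−∞, t₀] on which it is finite, and δ_Ω(t) → 0 as t → −∞. -/
import Mathlib


open Set Filter

theorem stmt17 (Ω : Set ℂ) (a b y₀ : ℝ)
    (hopen : IsOpen Ω) (hconn : IsConnected Ω) (hne : Ω ≠ Set.univ)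
    (hsc : SimplyConnectedSpace Ω)
    (hstar : ∀ w ∈ Ω, ∀ t : ℝ, 0 ≤ t → w + t ∈ Ω)
    (hab : a < b) (hy₀ : y₀ ∈ Ioo a b)
    (hS : {z : ℂ | a < z.im ∧ z.im < b} ⊆ Ω)
    (hmax : ∀ a' b' : ℝ, a' ≤ a → b ≤ b' →
      {z : ℂ | a' < z.im ∧ z.im < b'} ⊆ Ω → a' = a ∧ b' = b) :
    let I : ℝ → Set ℝ := fun t =>
      connectedComponentIn {y : ℝ | (t : ℂ) + (y : ℂ) * Complex.I ∈ Ω} y₀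
    let δΩ : ℝ → ℝ := fun t => max (a - sInf (I t)) (sSup (I t) - b)
    (∀ t₀ : ℝ, (∀ t ≤ t₀, BddBelow (I t) ∧ BddAbove (I t)) →
      MonotoneOn δΩ (Iic t₀)) ∧
    Tendsto δΩ atBot (nhds 0) := by
  intro I δΩ
  -- the strip is contained in every vertical slice
  have hsliceS : ∀ t : ℝ, Ioo a b ⊆ {y : ℝ | (t : ℂ) + (y : ℂ) * Complex.I ∈ Ω} := by
    intro t y hy
    apply hS
    simp only [Set.mem_setOf_eq, Complex.add_im, Complex.ofReal_im, Complex.mul_im,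
      Complex.ofReal_re, Complex.I_im, Complex.I_re, mul_one, mul_zero]
    constructor <;> simp <;> [exact hy.1; exact hy.2]
  have hsub : ∀ t : ℝ, Ioo a b ⊆ I t := fun t =>
    isPreconnected_Ioo.subset_connectedComponentIn hy₀ (hsliceS t)
  have hy₀I : ∀ t : ℝ, y₀ ∈ I t := fun t => hsub t hy₀
  have hne' : ∀ t : ℝ, (I t).Nonempty := fun t => ⟨y₀, hy₀I t⟩
  have hIsub : ∀ t : ℝ, I t ⊆ {y : ℝ | (t : ℂ) + (y : ℂ) * Complex.I ∈ Ω} :=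
    fun t => connectedComponentIn_subset _ _
  have hord : ∀ t : ℝ, OrdConnected (I t) := fun t =>
    isPreconnected_connectedComponentIn.ordConnected
  have hmono : ∀ t s : ℝ, t ≤ s → I t ⊆ I s := by
    intro t s hts
    apply IsPreconnected.subset_connectedComponentIn
      isPreconnected_connectedComponentIn (hy₀I t)
    intro y hy
    have hw := hstar _ (hIsub t hy) (s - t) (by linarith)
    have heq : ((t : ℂ) + (y : ℂ) * Complex.I) + ((s - t : ℝ) : ℂ)
        = (s : ℂ) + (y : ℂ) * Complex.I := by push_cast; ring
    rw [heq] at hw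
    exact hw
  -- a point strictly between an element of I t and another element is in I t
  have hbetween : ∀ t y : ℝ, (∃ u ∈ I t, u ≤ y) → (∃ v ∈ I t, y ≤ v) → y ∈ I t := by
    rintro t y ⟨u, hu, huy⟩ ⟨v, hv, hyv⟩
    exact (hord t).out hu hv ⟨huy, hyv⟩
  -- reconstruct a complex point from a slice membership, using starlikeness
  have hpoint : ∀ (t : ℝ) (z : ℂ), t ≤ z.re → z.im ∈ I t → z ∈ Ω := by
    intro t z htz hy
    have hw := hstar _ (hIsub t hy) (z.re - t) (by linarith)
    have heq : ((t : ℂ) + (z.im : ℂ) * Complex.I) + ((z.re - t : ℝ) : ℂ)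
        = (z.re : ℂ) + (z.im : ℂ) * Complex.I := by push_cast; ring
    rw [heq, Complex.re_add_im] at hw
    exact hw
  -- key lemma, lower side
  have key_low : ∀ c : ℝ, c ≤ a → (∀ x : ℝ, ∃ t ≤ x, ∃ u ∈ I t, u < c) → c = a := by
    intro c hca hcof
    refine (hmax c b hca le_rfl ?_).1
    intro z hz
    obtain ⟨t, htz, u, huI, huc⟩ := hcof z.re
    set y := z.im with hy
    have hyb : y < b := hz.2
    have hcy : c < y := hz.1
    have hmb : max y a < b := max_lt hyb hab
    set v := (max y a + b) / 2 with hv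
    have hv1 : max y a < v := by rw [hv]; linarith
    have hva : a < v := lt_of_le_of_lt (le_max_right y a) hv1
    have hvb : v < b := by rw [hv]; linarith
    have hvI : v ∈ I t := hsub t ⟨hva, hvb⟩
    have hyv : y ≤ v := le_of_lt (lt_of_le_of_lt (le_max_left y a) hv1)
    have hyI : y ∈ I t := hbetween t y ⟨u, huI, by linarith⟩ ⟨v, hvI, hyv⟩
    exact hpoint t z htz hyI
  -- key lemma, upper side
  have key_high : ∀ c : ℝ, b ≤ c → (∀ x : ℝ, ∃ t ≤ x, ∃ v ∈ I t, c < v) → c = b := by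
    intro c hbc hcof
    refine (hmax a c le_rfl hbc ?_).2
    intro z hz
    obtain ⟨t, htz, v, hvI, hcv⟩ := hcof z.re
    set y := z.im with hy
    have hay : a < y := hz.1
    have hyc : y < c := hz.2
    have hmb : a < min y b := lt_min hay hab
    set u := (a + min y b) / 2 with hu
    have hu1 : u < min y b := by rw [hu]; linarith
    have hua : a < u := by rw [hu]; linarith
    have hub : u < b := lt_of_lt_of_le hu1 (min_le_right y b)
    have huI : u ∈ I t := hsub t ⟨hua, hub⟩
    have huy : u ≤ y := le_of_lt (lt_of_lt_of_le hu1 (min_le_left y b))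
    have hyI : y ∈ I t := hbetween t y ⟨u, huI, huy⟩ ⟨v, hvI, by linarith⟩
    exact hpoint t z htz hyI
  constructor
  · -- monotonicity
    intro t₀ hbdd t ht s hs hts
    have h1 : sInf (I s) ≤ sInf (I t) :=
      csInf_le_csInf (hbdd s hs).1 (hne' t) (hmono t s hts)
    have h2 : sSup (I t) ≤ sSup (I s) :=
      csSup_le_csSup (hbdd s hs).2 (hne' t) (hmono t s hts)
    exact max_le_max (by linarith) (by linarith)
  · -- limit at -∞
    rw [Metric.tendsto_nhds]
    intro ε hε
    rw [eventually_atBot]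
    have hl : ¬ (∀ x : ℝ, ∃ t ≤ x, ∃ u ∈ I t, u < a - ε / 2) := by
      intro h
      have := key_low (a - ε / 2) (by linarith) h
      linarith
    have hh : ¬ (∀ x : ℝ, ∃ t ≤ x, ∃ v ∈ I t, b + ε / 2 < v) := by
      intro h
      have := key_high (b + ε / 2) (by linarith) h
      linarith
    push_neg at hl hh
    obtain ⟨T₁, hT₁⟩ := hl
    obtain ⟨T₂, hT₂⟩ := hh
    refine ⟨min T₁ T₂, fun t ht => ?_⟩
    have ht1 : t ≤ T₁ := le_trans ht (min_le_left _ _)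
    have ht2 : t ≤ T₂ := le_trans ht (min_le_right _ _)
    have hbb : BddBelow (I t) := ⟨a - ε / 2, fun u hu => hT₁ t ht1 u hu⟩
    have hba : BddAbove (I t) := ⟨b + ε / 2, fun v hv => hT₂ t ht2 v hv⟩
    have hinf_le : sInf (I t) ≤ a := by
      have := csInf_le_csInf hbb (nonempty_Ioo.2 hab) (hsub t)
      rwa [csInf_Ioo hab] at this
    have hle_inf : a - ε / 2 ≤ sInf (I t) := le_csInf (hne' t) (fun u hu => hT₁ t ht1 u hu)
    have hsup_ge : b ≤ sSup (I t) := by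
      have := csSup_le_csSup hba (nonempty_Ioo.2 hab) (hsub t)
      rwa [csSup_Ioo hab] at this
    have hsup_le : sSup (I t) ≤ b + ε / 2 := csSup_le (hne' t) (fun v hv => hT₂ t ht2 v hv)
    have hδ : δΩ t = max (a - sInf (I t)) (sSup (I t) - b) := rfl
    have h0 : (0:ℝ) ≤ a - sInf (I t) := by linarith
    have h1 : max (a - sInf (I t)) (sSup (I t) - b) ≤ ε / 2 :=
      max_le (by linarith) (by linarith)
    rw [Real.dist_eq, sub_zero, hδ, abs_of_nonneg (le_max_of_le_left h0)]
    linarith
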